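/- Let G be a second countable locally compact group with a left Haar measure dg and a length function L. Let (X, m) be a measure space and let π be a strongly continuous unitary representation of G on the complex Hilbert space L²(X, m) which is positive, i.e., for every g ∈ G, π(g) maps the cone of almost everywhere nonnegative functions into itself. Then the following are equivalent: (i) there exists d ≥ 1 such that for all ξ, η ∈ L²(X, m) one has ∫_G |⟨π(g)ξ, η⟩|² (1 + L(g))^{-d} dg < ∞; (ii) there exists d ≥ 1 such that for every almost everywhere nonnegative ξ ∈ L²(X, m) one has ∫_G ⟨π(g)ξ, ξ⟩² (1 + L(g))^{-d} dg < ∞. -/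

import Mathlib

open MeasureTheory
open scoped ComplexOrder

lemma aux_inner_nonneg {X : Type*} [MeasurableSpace X] {m : Measure X}
    (f g : Lp ℂ 2 m) (hf : ∀ᵐ x ∂m, 0 ≤ f x) (hg : ∀ᵐ x ∂m, 0 ≤ g x) :
    0 ≤ (inner ℂ f g : ℂ) := by
  have hae : ∀ᵐ x ∂m, 0 ≤ (inner ℂ (f x) (g x) : ℂ) := by
    filter_upwards [hf, hg] with x hfx hgx
    rw [RCLike.inner_apply]
    have : (starRingEnd ℂ) (f x) = f x := by
      obtain ⟨h1, h2⟩ := Complex.nonneg_iff.mp hfx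
      exact Complex.ext rfl (by simp [← h2])
    rw [this]
    exact mul_nonneg hgx hfx
  rw [MeasureTheory.L2.inner_def, Complex.nonneg_iff]
  have hint := MeasureTheory.L2.integrable_inner (𝕜 := ℂ) f g
  constructor
  · rw [show (∫ a, (inner ℂ (f a) (g a) : ℂ) ∂m).re = RCLike.re (∫ a, (inner ℂ (f a) (g a) : ℂ) ∂m) from rfl,
      ← integral_re hint]
    refine integral_nonneg_of_ae ?_
    filter_upwards [hae] with x hx
    exact (Complex.nonneg_iff.mp hx).1
  · rw [show (∫ a, (inner ℂ (f a) (g a) : ℂ) ∂m).im = RCLike.im (∫ a, (inner ℂ (f a) (g a) : ℂ) ∂m) from rfl,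
      ← integral_im hint]
    refine (integral_eq_zero_of_ae ?_).symm
    filter_upwards [hae] with x hx
    exact ((Complex.nonneg_iff.mp hx).2).symm

lemma aux_norm_le_diag {X : Type*} [MeasurableSpace X] {m : Measure X}
    (T : Lp ℂ 2 m ≃ₗᵢ[ℂ] Lp ℂ 2 m)
    (hT : ∀ ξ : Lp ℂ 2 m, (∀ᵐ x ∂m, 0 ≤ ξ x) → ∀ᵐ x ∂m, 0 ≤ (T ξ) x)
    (p q : Lp ℂ 2 m) (hp : ∀ᵐ x ∂m, 0 ≤ p x) (hq : ∀ᵐ x ∂m, 0 ≤ q x) :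
    ‖(inner ℂ (T p) q : ℂ)‖ ≤ (inner ℂ (T (p + q)) (p + q) : ℂ).re := by
  have hTp := hT p hp
  have hTq := hT q hq
  have h1 : 0 ≤ (inner ℂ (T p) q : ℂ) := aux_inner_nonneg _ _ hTp hq
  have h2 : 0 ≤ (inner ℂ (T p) p : ℂ) := aux_inner_nonneg _ _ hTp hp
  have h3 : 0 ≤ (inner ℂ (T q) p : ℂ) := aux_inner_nonneg _ _ hTq hp
  have h4 : 0 ≤ (inner ℂ (T q) q : ℂ) := aux_inner_nonneg _ _ hTq hq
  have hexp : (inner ℂ (T (p + q)) (p + q) : ℂ)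
      = inner ℂ (T p) q + (inner ℂ (T p) p + inner ℂ (T q) p + inner ℂ (T q) q) := by
    rw [map_add, inner_add_left, inner_add_right, inner_add_right]; ring
  have hle : (inner ℂ (T p) q : ℂ) ≤ inner ℂ (T (p + q)) (p + q) := by
    rw [hexp]
    exact le_add_of_nonneg_right (by positivity)
  obtain ⟨hre, him⟩ := Complex.nonneg_iff.mp h1
  have hz : (inner ℂ (T p) q : ℂ) = ((inner ℂ (T p) q : ℂ).re : ℂ) :=
    Complex.ext rfl (by simp [← him])
  calc ‖(inner ℂ (T p) q : ℂ)‖ = ‖((inner ℂ (T p) q : ℂ).re : ℂ)‖ := by rw [← hz]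
    _ = |(inner ℂ (T p) q : ℂ).re| := by rw [Complex.norm_real, Real.norm_eq_abs]
    _ = (inner ℂ (T p) q : ℂ).re := abs_of_nonneg hre
    _ ≤ (inner ℂ (T (p + q)) (p + q) : ℂ).re := (Complex.le_def.mp hle).1

lemma aux_lip (u : ℂ → ℝ) (hu : ∀ z w, |u z - u w| ≤ dist z w) :
    LipschitzWith 1 fun z : ℂ => ((max (u z) 0 : ℝ) : ℂ) := by
  refine LipschitzWith.of_dist_le_mul fun z w => ?_
  simp only [NNReal.coe_one, one_mul]
  calc dist ((max (u z) 0 : ℝ) : ℂ) ((max (u w) 0 : ℝ) : ℂ)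
      = dist (max (u z) 0) (max (u w) 0) := Complex.isometry_ofReal.dist_eq _ _
    _ = |max (u z) 0 - max (u w) 0| := Real.dist_eq _ _
    _ ≤ |u z - u w| := abs_max_sub_max_le_abs _ _ _
    _ ≤ dist z w := hu z w

lemma aux_part {X : Type*} [MeasurableSpace X] {m : Measure X}
    (u : ℂ → ℝ) (hu : ∀ z w, |u z - u w| ≤ dist z w) (hu0 : u 0 = 0) (f : Lp ℂ 2 m) :
    ∃ A : Lp ℂ 2 m, (∀ᵐ x ∂m, A x = ((max (u (f x)) 0 : ℝ) : ℂ)) ∧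
      ∀ᵐ x ∂m, 0 ≤ A x := by
  refine ⟨(aux_lip u hu).compLp (by simp [hu0]) f, LipschitzWith.coeFn_compLp _ _ f, ?_⟩
  filter_upwards [LipschitzWith.coeFn_compLp (aux_lip u hu) (by simp [hu0]) f] with x hx
  rw [hx]
  exact Complex.zero_le_real.2 (le_max_right _ _)

lemma aux_decomp {X : Type*} [MeasurableSpace X] {m : Measure X} (f : Lp ℂ 2 m) :
    ∃ P : Fin 4 → Lp ℂ 2 m, (∀ i, ∀ᵐ x ∂m, 0 ≤ (P i) x) ∧
      f = ∑ i, (![1, -1, Complex.I, -Complex.I] : Fin 4 → ℂ) i • P i := by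
  have hu1 : ∀ z w : ℂ, |z.re - w.re| ≤ dist z w := fun z w => by
    rw [Complex.dist_eq, ← Complex.sub_re]; exact Complex.abs_re_le_norm _
  have hu2 : ∀ z w : ℂ, |(-z.re) - (-w.re)| ≤ dist z w := fun z w => by
    rw [show -z.re - -w.re = -(z.re - w.re) by ring, abs_neg]; exact hu1 z w
  have hu3 : ∀ z w : ℂ, |z.im - w.im| ≤ dist z w := fun z w => by
    rw [Complex.dist_eq, ← Complex.sub_im]; exact Complex.abs_im_le_norm _
  have hu4 : ∀ z w : ℂ, |(-z.im) - (-w.im)| ≤ dist z w := fun z w => by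
    rw [show -z.im - -w.im = -(z.im - w.im) by ring, abs_neg]; exact hu3 z w
  obtain ⟨A, hA, hApos⟩ := aux_part (fun z => z.re) hu1 (by simp) f
  obtain ⟨B, hB, hBpos⟩ := aux_part (fun z => -z.re) hu2 (by simp) f
  obtain ⟨C, hC, hCpos⟩ := aux_part (fun z => z.im) hu3 (by simp) f
  obtain ⟨D, hD, hDpos⟩ := aux_part (fun z => -z.im) hu4 (by simp) f
  refine ⟨![A, B, C, D], ?_, ?_⟩
  · intro i
    fin_cases i <;> simpa using (by assumption : _)
  · rw [Fin.sum_univ_four]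
    simp only [Matrix.cons_val_zero, Matrix.cons_val_one, Matrix.head_cons,
      Matrix.cons_val_two, Matrix.tail_cons, Matrix.cons_val_three]
    have hmax : ∀ t : ℝ, max t 0 - max (-t) 0 = t := fun t => by
      rcases le_total t 0 with h | h
      · rw [max_eq_right h, max_eq_left (by linarith)]; ring
      · rw [max_eq_left h, max_eq_right (by linarith)]; ring
    have key : ∀ z : ℂ, z = (1 : ℂ) * ((max z.re 0 : ℝ) : ℂ)
        + (-1 : ℂ) * ((max (-z.re) 0 : ℝ) : ℂ)
        + Complex.I * ((max z.im 0 : ℝ) : ℂ)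
        + (-Complex.I) * ((max (-z.im) 0 : ℝ) : ℂ) := by
      intro z
      have h1 : ((max z.re 0 : ℝ) : ℂ) - ((max (-z.re) 0 : ℝ) : ℂ) = (z.re : ℂ) := by
        rw [← Complex.ofReal_sub, hmax]
      have h2 : ((max z.im 0 : ℝ) : ℂ) - ((max (-z.im) 0 : ℝ) : ℂ) = (z.im : ℂ) := by
        rw [← Complex.ofReal_sub, hmax]
      calc z = (z.re : ℂ) + (z.im : ℂ) * Complex.I := (Complex.re_add_im z).symm
        _ = (((max z.re 0 : ℝ) : ℂ) - ((max (-z.re) 0 : ℝ) : ℂ))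
            + (((max z.im 0 : ℝ) : ℂ) - ((max (-z.im) 0 : ℝ) : ℂ)) * Complex.I := by
            rw [h1, h2]
        _ = _ := by ring
    refine MeasureTheory.Lp.ext ?_
    filter_upwards [hA, hB, hC, hD,
      MeasureTheory.Lp.coeFn_add ((1 : ℂ) • A + (-1 : ℂ) • B + Complex.I • C) ((-Complex.I) • D),
      MeasureTheory.Lp.coeFn_add ((1 : ℂ) • A + (-1 : ℂ) • B) (Complex.I • C),
      MeasureTheory.Lp.coeFn_add ((1 : ℂ) • A) ((-1 : ℂ) • B),
      MeasureTheory.Lp.coeFn_smul (1 : ℂ) A,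
      MeasureTheory.Lp.coeFn_smul (-1 : ℂ) B,
      MeasureTheory.Lp.coeFn_smul Complex.I C,
      MeasureTheory.Lp.coeFn_smul (-Complex.I) D] with x h1 h2 h3 h4 e1 e2 e3 s1 s2 s3 s4
    rw [e1, Pi.add_apply, e2, Pi.add_apply, e3, Pi.add_apply, s1, s2, s3, s4,
      Pi.smul_apply, Pi.smul_apply, Pi.smul_apply, Pi.smul_apply,
      smul_eq_mul, smul_eq_mul, smul_eq_mul, smul_eq_mul, h1, h2, h3, h4]
    exact key (f x)

/-- Let `G` be a second countable locally compact group with a left Haar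
measure and a length function `L`, and let `π` be a strongly continuous unitary
representation of `G` on `L²(X, m)` which is positive (it preserves the cone of a.e.
nonnegative functions). Then: there exists `d ≥ 1` such that
`∫_G |⟨π(g)ξ, η⟩|² (1 + L(g))^{-d} dg < ∞` for all `ξ, η`, iff there exists `d ≥ 1` such
that `∫_G ⟨π(g)ξ, ξ⟩² (1 + L(g))^{-d} dg < ∞` for every a.e. nonnegative `ξ`. -/
theorem stmt5
    {G : Type*} [Group G] [TopologicalSpace G] [IsTopologicalGroup G]
    [LocallyCompactSpace G] [SecondCountableTopology G]
    [MeasurableSpace G] [BorelSpace G]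
    (μ : Measure G) [μ.IsHaarMeasure]
    (L : G → ℝ) (hL_meas : Measurable L) (hL_nonneg : ∀ g, 0 ≤ L g)
    (hL_bdd : ∀ Q : Set G, IsCompact Q → BddAbove (L '' Q))
    (hL_one : L 1 = 0) (hL_inv : ∀ g, L g⁻¹ = L g)
    (hL_sub : ∀ g h : G, L (g * h) ≤ L g + L h)
    {X : Type*} [MeasurableSpace X] (m : Measure X)
    (π : G →* (Lp ℂ 2 m ≃ₗᵢ[ℂ] Lp ℂ 2 m))
    (hπcont : ∀ ξ : Lp ℂ 2 m, Continuous fun g : G => π g ξ)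
    (hπpos : ∀ (g : G) (ξ : Lp ℂ 2 m), (∀ᵐ x ∂m, 0 ≤ ξ x) → ∀ᵐ x ∂m, 0 ≤ ((π g) ξ) x) :
    (∃ d : ℝ, 1 ≤ d ∧ ∀ ξ η : Lp ℂ 2 m,
        ∫⁻ g, ENNReal.ofReal (‖(inner ℂ ((π g) ξ) η : ℂ)‖ ^ 2 / (1 + L g) ^ d) ∂μ < ⊤)
      ↔
    (∃ d : ℝ, 1 ≤ d ∧ ∀ ξ : Lp ℂ 2 m, (∀ᵐ x ∂m, 0 ≤ ξ x) →
        ∫⁻ g, ENNReal.ofReal ((inner ℂ ((π g) ξ) ξ : ℂ).re ^ 2 / (1 + L g) ^ d) ∂μ < ⊤) := by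
  constructor
  · rintro ⟨d, hd, hfin⟩
    refine ⟨d, hd, fun ξ _ => ?_⟩
    refine lt_of_le_of_lt (lintegral_mono fun g => ?_) (hfin ξ ξ)
    apply ENNReal.ofReal_le_ofReal
    have hD : (0:ℝ) < (1 + L g) ^ d := Real.rpow_pos_of_pos (by linarith [hL_nonneg g]) d
    have hre : (inner ℂ ((π g) ξ) ξ : ℂ).re ^ 2 ≤ ‖(inner ℂ ((π g) ξ) ξ : ℂ)‖ ^ 2 := by
      rw [← sq_abs]
      exact pow_le_pow_left₀ (abs_nonneg _) (Complex.abs_re_le_norm _) 2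
    exact div_le_div_of_nonneg_right hre hD.le
  · rintro ⟨d, hd, hfin⟩
    refine ⟨d, hd, fun ξ η => ?_⟩
    obtain ⟨P, hPpos, hPeq⟩ := aux_decomp ξ
    obtain ⟨Q, hQpos, hQeq⟩ := aux_decomp η
    set c : Fin 4 → ℂ := ![1, -1, Complex.I, -Complex.I] with hc
    have hcnorm : ∀ i, ‖c i‖ = 1 := by intro i; fin_cases i <;> simp [hc]
    set b : Fin 4 → Fin 4 → G → ℝ := fun i j g =>
      (inner ℂ ((π g) (P i + Q j)) (P i + Q j) : ℂ).re with hb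
    have hζpos : ∀ i j, ∀ᵐ x ∂m, 0 ≤ (P i + Q j) x := by
      intro i j
      filter_upwards [hPpos i, hQpos j, MeasureTheory.Lp.coeFn_add (P i) (Q j)]
        with x h1 h2 h3
      rw [h3, Pi.add_apply]
      exact add_nonneg h1 h2
    have hbnonneg : ∀ i j g, 0 ≤ b i j g := fun i j g =>
      (Complex.nonneg_iff.mp (aux_inner_nonneg _ _ (hπpos g _ (hζpos i j)) (hζpos i j))).1
    have hnorm : ∀ g, ‖(inner ℂ ((π g) ξ) η : ℂ)‖ ≤ ∑ i, ∑ j, b i j g := by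
      intro g
      have hexpand : (inner ℂ ((π g) ξ) η : ℂ)
          = ∑ i, ∑ j, (starRingEnd ℂ) (c i) * (c j * inner ℂ ((π g) (P i)) (Q j)) := by
        conv_lhs => rw [hPeq, hQeq]
        rw [map_sum, sum_inner]
        simp_rw [LinearIsometryEquiv.map_smul, inner_smul_left, inner_sum,
          inner_smul_right, Finset.mul_sum]
      rw [hexpand]
      refine (norm_sum_le _ _).trans (Finset.sum_le_sum fun i _ => ?_)
      refine (norm_sum_le _ _).trans (Finset.sum_le_sum fun j _ => ?_)
      rw [norm_mul, norm_mul, RCLike.norm_conj, hcnorm, hcnorm, one_mul, one_mul]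
      exact aux_norm_le_diag (π g) (hπpos g) (P i) (Q j) (hPpos i) (hQpos j)
    have hsq : ∀ g, ‖(inner ℂ ((π g) ξ) η : ℂ)‖ ^ 2 ≤ 16 * ∑ i, ∑ j, b i j g ^ 2 := by
      intro g
      calc ‖(inner ℂ ((π g) ξ) η : ℂ)‖ ^ 2 ≤ (∑ i, ∑ j, b i j g) ^ 2 :=
            pow_le_pow_left₀ (norm_nonneg _) (hnorm g) 2
        _ = (∑ p : Fin 4 × Fin 4, b p.1 p.2 g) ^ 2 := by rw [Fintype.sum_prod_type]
        _ ≤ (Finset.univ (α := Fin 4 × Fin 4)).card * ∑ p : Fin 4 × Fin 4, b p.1 p.2 g ^ 2 :=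
            sq_sum_le_card_mul_sum_sq
        _ = 16 * ∑ i, ∑ j, b i j g ^ 2 := by
            rw [Fintype.sum_prod_type]
            norm_num [Finset.card_univ]
    have hmeas : ∀ i j, Measurable fun g => ENNReal.ofReal (16 * b i j g ^ 2 / (1 + L g) ^ d) := by
      intro i j
      have hcont : Continuous fun g => b i j g :=
        Complex.continuous_re.comp ((hπcont _).inner continuous_const)
      have hden : Measurable fun g => (1 + L g) ^ d := by
        have hrw : (fun g => (1 + L g) ^ d) = fun g => Real.exp (Real.log (1 + L g) * d) :=
          funext fun g => Real.rpow_def_of_pos (by linarith [hL_nonneg g]) d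
        rw [hrw]
        exact Real.measurable_exp.comp ((Real.measurable_log.comp
          (measurable_const.add hL_meas)).mul_const d)
      exact ENNReal.measurable_ofReal.comp
        (((hcont.measurable.pow_const 2).const_mul 16).div hden)
    have hpt : ∀ g, ENNReal.ofReal (‖(inner ℂ ((π g) ξ) η : ℂ)‖ ^ 2 / (1 + L g) ^ d)
        ≤ ∑ i, ∑ j, ENNReal.ofReal (16 * b i j g ^ 2 / (1 + L g) ^ d) := by
      intro g
      have hD : (0:ℝ) < (1 + L g) ^ d := Real.rpow_pos_of_pos (by linarith [hL_nonneg g]) d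
      calc ENNReal.ofReal (‖(inner ℂ ((π g) ξ) η : ℂ)‖ ^ 2 / (1 + L g) ^ d)
          ≤ ENNReal.ofReal ((16 * ∑ i, ∑ j, b i j g ^ 2) / (1 + L g) ^ d) :=
            ENNReal.ofReal_le_ofReal (div_le_div_of_nonneg_right (hsq g) hD.le)
        _ = ∑ i, ∑ j, ENNReal.ofReal (16 * b i j g ^ 2 / (1 + L g) ^ d) := by
            have hsplit : (16 * ∑ i, ∑ j, b i j g ^ 2) / (1 + L g) ^ d
                = ∑ i, ∑ j, 16 * b i j g ^ 2 / (1 + L g) ^ d := by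
              rw [Finset.mul_sum, Finset.sum_div]
              exact Finset.sum_congr rfl fun i _ => by rw [Finset.mul_sum, Finset.sum_div]
            rw [hsplit, ENNReal.ofReal_sum_of_nonneg
              (fun i _ => Finset.sum_nonneg fun j _ => div_nonneg (by positivity) hD.le)]
            exact Finset.sum_congr rfl fun i _ => ENNReal.ofReal_sum_of_nonneg
              (fun j _ => div_nonneg (by positivity) hD.le)
    have hterm : ∀ i j, ∫⁻ g, ENNReal.ofReal (16 * b i j g ^ 2 / (1 + L g) ^ d) ∂μ < ⊤ := by
      intro i j
      have h16 : ∀ g, ENNReal.ofReal (16 * b i j g ^ 2 / (1 + L g) ^ d)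
          = 16 * ENNReal.ofReal (b i j g ^ 2 / (1 + L g) ^ d) := fun g => by
        rw [mul_div_assoc, ENNReal.ofReal_mul (by norm_num : (0:ℝ) ≤ 16)]
        norm_num
      simp_rw [h16]
      rw [lintegral_const_mul' _ _ (by norm_num)]
      exact ENNReal.mul_lt_top (by norm_num) (hfin _ (hζpos i j))
    calc ∫⁻ g, ENNReal.ofReal (‖(inner ℂ ((π g) ξ) η : ℂ)‖ ^ 2 / (1 + L g) ^ d) ∂μ
        ≤ ∫⁻ g, ∑ i, ∑ j, ENNReal.ofReal (16 * b i j g ^ 2 / (1 + L g) ^ d) ∂μ :=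
          lintegral_mono hpt
      _ = ∑ i, ∑ j, ∫⁻ g, ENNReal.ofReal (16 * b i j g ^ 2 / (1 + L g) ^ d) ∂μ := by
          rw [lintegral_finset_sum _ (fun i _ => Finset.measurable_sum _ fun j _ => hmeas i j)]
          exact Finset.sum_congr rfl fun i _ => lintegral_finset_sum _ fun j _ => hmeas i j
      _ < ⊤ := by
          refine ENNReal.sum_lt_top.mpr fun i _ => ?_
          exact (ENNReal.sum_lt_top.mpr fun j _ => hterm i j)
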